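/- arXiv:1211.0998 — 2 statements merged into one kernel-verified Lean document; each statement's English description precedes it below -/
import Mathlib

section
/- Let r ∈ ℤ_{≥0}, M an a_r-module, and α ∈ ℂ. Then for every integer s > 2r+2 and all l, m ∈ ℤ, the operator ω^{(s)}_{l,m} is identically zero on N(M,α). -/
open Finsupp
open fwdDiff

variable {M : Type*} [AddCommGroup M] [Module ℂ M]

/-- `(M, T)` is an `a_r`-module: `M` carries operators `T_0, …, T_r` with
`T_i∘T_j − T_j∘T_i = (j−i)·T_{i+j}` for `i+j ≤ r` and `T_i∘T_j = T_j∘T_i` for `i+j > r`. -/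
def IsArModule (r : ℕ) (T : ℕ → Module.End ℂ M) : Prop :=
  (∀ i j, i ≤ r → j ≤ r → i + j ≤ r →
      T i ∘ₗ T j - T j ∘ₗ T i = (((j : ℂ) - (i : ℂ)) • T (i + j))) ∧
  (∀ i j, i ≤ r → j ≤ r → r < i + j → T i ∘ₗ T j = T j ∘ₗ T i)

/-- A subspace `U ⊆ M` is an `a_r`-submodule if `T_i U ⊆ U` for all `0 ≤ i ≤ r`. -/
def IsArSubmodule (r : ℕ) (T : ℕ → Module.End ℂ M) (U : Submodule ℂ M) : Prop :=
  ∀ i ≤ r, ∀ v ∈ U, T i v ∈ U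

/-- `M` is a simple `a_r`-module: nonzero, and the only `a_r`-submodules are `0` and `M`. -/
def IsSimpleArModule (r : ℕ) (T : ℕ → Module.End ℂ M) : Prop :=
  (∃ v : M, v ≠ 0) ∧
    ∀ U : Submodule ℂ M, IsArSubmodule r T U → U = ⊥ ∨ U = ⊤

/-- The operator `D_m` on `N(M, α) = ⊕_{n ∈ ℤ} M ⊗ t^n` (finitely supported functions `ℤ → M`,
with `v ⊗ t^n` the function `Finsupp.single n v`), given by
`D_m (v ⊗ t^n) = ((α+n)•v + Σ_{i=0}^r (m^{i+1}/(i+1)!) • T_i v) ⊗ t^{n+m}`. -/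
noncomputable def Dop (r : ℕ) (T : ℕ → Module.End ℂ M) (α : ℂ) (m : ℤ) :
    (ℤ →₀ M) →ₗ[ℂ] (ℤ →₀ M) :=
  Finsupp.lsum ℂ fun n : ℤ =>
    (Finsupp.lsingle (n + m) : M →ₗ[ℂ] ℤ →₀ M) ∘ₗ
      ((α + (n : ℂ)) • (LinearMap.id : M →ₗ[ℂ] M) +
        ∑ i ∈ Finset.range (r + 1),
          ((m : ℂ) ^ (i + 1) / (Nat.factorial (i + 1) : ℂ)) • (T i : M →ₗ[ℂ] M))

/-- The operator `ω^{(s)}_{l,m} = Σ_{i=0}^s binom(s,i)·(−1)^{s−i}·D_{l−m−i}∘D_{m+i}`. -/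
noncomputable def omegaOp (r : ℕ) (T : ℕ → Module.End ℂ M) (α : ℂ) (s : ℕ) (l m : ℤ) :
    (ℤ →₀ M) →ₗ[ℂ] (ℤ →₀ M) :=
  ∑ i ∈ Finset.range (s + 1),
    ((s.choose i : ℂ) * (-1) ^ (s - i)) •
      (Dop r T α (l - m - (i : ℤ)) ∘ₗ Dop r T α (m + (i : ℤ)))

private lemma fwdDiff_iter_smul_const' (f : ℕ → ℂ) (c : M) (n : ℕ) :
    (Δ_[1])^[n] (fun y => f y • c) = fun y => ((Δ_[1])^[n] f y) • c := by
  induction n generalizing f with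
  | zero => simp
  | succ n IH =>
      rw [Function.iterate_succ_apply, Function.iterate_succ_apply,
        show (Δ_[1] fun y => f y • c) = fun y => (Δ_[1] f y) • c from
          funext fun y => (sub_smul _ _ _).symm, IH]

private lemma fwdDiff_iter_pow' (d : ℕ) : ∀ s : ℕ, d < s →
    (Δ_[1])^[s] (fun i : ℕ => (i : ℂ) ^ d) = 0 := by
  induction d using Nat.strong_induction_on with
  | _ d IH =>
    intro s hd
    obtain ⟨t, rfl⟩ : ∃ t, s = t + 1 := ⟨s - 1, by omega⟩
    rw [Function.iterate_succ_apply]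
    have h1 : Δ_[1] (fun i : ℕ => (i : ℂ) ^ d)
        = ∑ e ∈ Finset.range d, (d.choose e : ℂ) • fun i : ℕ => (i : ℂ) ^ e := by
      funext i
      simp only [fwdDiff, Finset.sum_apply, Pi.smul_apply, smul_eq_mul]
      push_cast
      rw [add_pow, Finset.sum_range_succ]
      simp [mul_comm]
    rw [h1, fwdDiff_iter_finset_sum]
    refine Finset.sum_eq_zero fun e he => ?_
    rw [fwdDiff_iter_const_smul, IH e (Finset.mem_range.mp he) t
      (by have := Finset.mem_range.mp he; omega), smul_zero]

private lemma fwdDiff_iter_eval_smul (P : Polynomial ℂ) (c : M) (s : ℕ) (hP : P.natDegree < s) :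
    (Δ_[1])^[s] (fun i : ℕ => P.eval (i : ℂ) • c) = 0 := by
  have h1 : (fun i : ℕ => P.eval (i : ℂ) • c)
      = ∑ d ∈ Finset.range (P.natDegree + 1), fun i : ℕ => ((i : ℂ) ^ d) • (P.coeff d • c) := by
    funext i
    rw [Polynomial.eval_eq_sum_range, Finset.sum_apply, Finset.sum_smul]
    exact Finset.sum_congr rfl fun d _ => by rw [mul_comm, mul_smul]
  rw [h1, fwdDiff_iter_finset_sum]
  refine Finset.sum_eq_zero fun d hd => ?_
  rw [fwdDiff_iter_smul_const', fwdDiff_iter_pow' d s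
    (by have := Finset.mem_range.mp hd; omega)]
  funext y; simp

private lemma deg_aux (p : Polynomial ℂ) (t : ℕ) (hp : p.natDegree ≤ 1) (c : ℂ) :
    (p ^ t * Polynomial.C c).natDegree ≤ t := by
  refine le_trans (Polynomial.natDegree_mul_le) ?_
  simp only [Polynomial.natDegree_C, add_zero]
  exact le_trans Polynomial.natDegree_pow_le (by simpa using Nat.mul_le_mul_left t hp)

private lemma natDegree_CaddX_le (a : ℂ) : (Polynomial.C a + Polynomial.X).natDegree ≤ 1 := by
  refine le_trans (Polynomial.natDegree_add_le _ _) ?_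
  simp

private lemma natDegree_CsubX_le (a : ℂ) : (Polynomial.C a - Polynomial.X).natDegree ≤ 1 := by
  refine le_trans (Polynomial.natDegree_sub_le _ _) ?_
  simp

private lemma Dop_single (r : ℕ) (T : ℕ → Module.End ℂ M) (α : ℂ) (m n : ℤ) (v : M) :
    Dop r T α m (Finsupp.single n v) = Finsupp.single (n + m)
      ((α + (n : ℂ)) • v + ∑ i ∈ Finset.range (r + 1),
        ((m : ℂ) ^ (i + 1) / (Nat.factorial (i + 1) : ℂ)) • T i v) := by
  rw [Dop, Finsupp.lsum_single]
  simp [LinearMap.sum_apply]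

/-- for an `a_r`-module `M` and `α ∈ ℂ`, for every integer `s > 2r+2` and all
`l, m ∈ ℤ`, the operator `ω^{(s)}_{l,m}` is identically zero on `N(M,α)`. -/
theorem omega_vanishes_above_top (r : ℕ) (T : ℕ → Module.End ℂ M)
    (hT : IsArModule r T) (α : ℂ) (s : ℕ) (hs : 2 * r + 2 < s) (l m : ℤ) :
    omegaOp r T α s l m = 0 := by
  classical
  apply Finsupp.lhom_ext
  intro n v
  rw [omegaOp]
  simp only [LinearMap.sum_apply, LinearMap.smul_apply, LinearMap.comp_apply, Dop_single,
    LinearMap.zero_apply]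
  set W : ℕ → M := fun x =>
    (α + ((n + (m + (x : ℤ)) : ℤ) : ℂ)) •
        ((α + (n : ℂ)) • v + ∑ k ∈ Finset.range (r + 1),
          (((m + (x : ℤ) : ℤ) : ℂ) ^ (k + 1) / ((k + 1).factorial : ℂ)) • T k v) +
      ∑ j ∈ Finset.range (r + 1),
        (((l - m - (x : ℤ) : ℤ) : ℂ) ^ (j + 1) / ((j + 1).factorial : ℂ)) •
          T j ((α + (n : ℂ)) • v + ∑ k ∈ Finset.range (r + 1),
            (((m + (x : ℤ) : ℤ) : ℂ) ^ (k + 1) / ((k + 1).factorial : ℂ)) • T k v) with hWdef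
  have hstep1 : ∀ x ∈ Finset.range (s + 1),
      ((s.choose x : ℂ) * (-1) ^ (s - x)) •
        Finsupp.single (n + (m + (x : ℤ)) + (l - m - (x : ℤ))) (W x)
      = Finsupp.single (n + l) (((s.choose x : ℂ) * (-1) ^ (s - x)) • W x) := by
    intro x _
    rw [show n + (m + (x : ℤ)) + (l - m - (x : ℤ)) = n + l by ring, Finsupp.smul_single]
  rw [Finset.sum_congr rfl hstep1]
  have hstep2 : (∑ x ∈ Finset.range (s + 1),
      Finsupp.single (n + l) (((s.choose x : ℂ) * (-1) ^ (s - x)) • W x))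
      = Finsupp.single (n + l)
        (∑ x ∈ Finset.range (s + 1), ((s.choose x : ℂ) * (-1) ^ (s - x)) • W x) :=
    (map_sum (Finsupp.lsingle (n + l) : M →ₗ[ℂ] ℤ →₀ M)
      (fun x => ((s.choose x : ℂ) * (-1) ^ (s - x)) • W x) (Finset.range (s + 1))).symm
  rw [hstep2]
  -- the s-th forward difference of `W` vanishes since `W` is polynomial of degree ≤ 2r+2 < s
  have hdiff : (fwdDiff 1)^[s] W = 0 := by
    have hw : W = (fun x : ℕ =>
          ((Polynomial.C (α + (n : ℂ) + (m : ℂ)) + Polynomial.X) *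
            Polynomial.C (α + (n : ℂ))).eval (x : ℂ) • v)
        + (∑ k ∈ Finset.range (r + 1), fun x : ℕ =>
          ((Polynomial.C (α + (n : ℂ) + (m : ℂ)) + Polynomial.X) *
            ((Polynomial.C (m : ℂ) + Polynomial.X) ^ (k + 1) *
              Polynomial.C (((k + 1).factorial : ℂ))⁻¹)).eval (x : ℂ) • T k v)
        + (∑ j ∈ Finset.range (r + 1), fun x : ℕ =>
          (((Polynomial.C ((l : ℂ) - (m : ℂ)) - Polynomial.X) ^ (j + 1) *
              Polynomial.C (((j + 1).factorial : ℂ))⁻¹) *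
            Polynomial.C (α + (n : ℂ))).eval (x : ℂ) • T j v)
        + (∑ j ∈ Finset.range (r + 1), ∑ k ∈ Finset.range (r + 1), fun x : ℕ =>
          ((Polynomial.C ((l : ℂ) - (m : ℂ)) - Polynomial.X) ^ (j + 1) *
              Polynomial.C (((j + 1).factorial : ℂ))⁻¹ *
            ((Polynomial.C (m : ℂ) + Polynomial.X) ^ (k + 1) *
              Polynomial.C (((k + 1).factorial : ℂ))⁻¹)).eval (x : ℂ) •
                T j (T k v)) := by
      funext x
      simp only [hWdef, Pi.add_apply, Finset.sum_apply, Polynomial.eval_mul, Polynomial.eval_add,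
        Polynomial.eval_sub, Polynomial.eval_pow, Polynomial.eval_C, Polynomial.eval_X]
      have hA : (α + ((n + (m + (x : ℤ)) : ℤ) : ℂ)) •
            ((α + (n : ℂ)) • v + ∑ k ∈ Finset.range (r + 1),
              (((m + (x : ℤ) : ℤ) : ℂ) ^ (k + 1) / ((k + 1).factorial : ℂ)) • T k v)
          = ((α + (n : ℂ) + (m : ℂ) + (x : ℂ)) * (α + (n : ℂ))) • v +
            ∑ k ∈ Finset.range (r + 1),
              ((α + (n : ℂ) + (m : ℂ) + (x : ℂ)) *
                (((m : ℂ) + (x : ℂ)) ^ (k + 1) * (((k + 1).factorial : ℂ))⁻¹)) • T k v := by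
        simp only [smul_add, Finset.smul_sum]
        congr 1
        · push_cast
          module
        · refine Finset.sum_congr rfl fun k _ => ?_
          push_cast
          module
      have hB : (∑ j ∈ Finset.range (r + 1),
            (((l - m - (x : ℤ) : ℤ) : ℂ) ^ (j + 1) / ((j + 1).factorial : ℂ)) •
              T j ((α + (n : ℂ)) • v + ∑ k ∈ Finset.range (r + 1),
                (((m + (x : ℤ) : ℤ) : ℂ) ^ (k + 1) / ((k + 1).factorial : ℂ)) • T k v))
          = (∑ j ∈ Finset.range (r + 1),
              (((l : ℂ) - (m : ℂ) - (x : ℂ)) ^ (j + 1) * (((j + 1).factorial : ℂ))⁻¹ *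
                (α + (n : ℂ))) • T j v) +
            ∑ j ∈ Finset.range (r + 1), ∑ k ∈ Finset.range (r + 1),
              ((((l : ℂ) - (m : ℂ) - (x : ℂ)) ^ (j + 1) * (((j + 1).factorial : ℂ))⁻¹ *
                (((m : ℂ) + (x : ℂ)) ^ (k + 1) * (((k + 1).factorial : ℂ))⁻¹))) •
                  T j (T k v) := by
        rw [← Finset.sum_add_distrib]
        refine Finset.sum_congr rfl fun j _ => ?_
        simp only [map_add, map_smul, map_sum, smul_add, Finset.smul_sum]
        congr 1
        · push_cast
          module
        · refine Finset.sum_congr rfl fun k _ => ?_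
          push_cast
          module
      rw [hA, hB]
      abel
    rw [hw]
    simp only [fwdDiff_iter_add, fwdDiff_iter_finset_sum]
    rw [fwdDiff_iter_eval_smul _ _ _ (by
      refine lt_of_le_of_lt (le_trans Polynomial.natDegree_mul_le ?_) (show 1 < s by omega)
      simpa using natDegree_CaddX_le (α + (n : ℂ) + (m : ℂ)))]
    rw [Finset.sum_eq_zero fun k hk => fwdDiff_iter_eval_smul _ _ _ (by
      have hk' := Finset.mem_range.mp hk
      refine lt_of_le_of_lt (le_trans Polynomial.natDegree_mul_le ?_)
        (show 1 + (k + 1) < s by omega)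
      exact add_le_add (natDegree_CaddX_le _) (deg_aux _ _ (natDegree_CaddX_le _) _))]
    rw [Finset.sum_eq_zero fun j hj => fwdDiff_iter_eval_smul _ _ _ (by
      have hj' := Finset.mem_range.mp hj
      refine lt_of_le_of_lt (le_trans Polynomial.natDegree_mul_le ?_)
        (show (j + 1) + 0 < s by omega)
      exact add_le_add (deg_aux _ _ (natDegree_CsubX_le _) _) (le_of_eq (Polynomial.natDegree_C _)))]
    rw [Finset.sum_eq_zero fun j hj => Finset.sum_eq_zero fun k hk =>
      fwdDiff_iter_eval_smul _ _ _ (by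
        have hj' := Finset.mem_range.mp hj
        have hk' := Finset.mem_range.mp hk
        refine lt_of_le_of_lt (le_trans Polynomial.natDegree_mul_le ?_)
          (show (j + 1) + (k + 1) < s by omega)
        exact add_le_add (deg_aux _ _ (natDegree_CsubX_le _) _)
          (deg_aux _ _ (natDegree_CaddX_le _) _))]
    simp
  have hzero : ∑ x ∈ Finset.range (s + 1), ((s.choose x : ℂ) * (-1) ^ (s - x)) • W x = 0 := by
    have h0 := fwdDiff_iter_eq_sum_shift (1 : ℕ) W s 0
    rw [hdiff] at h0
    simp only [Pi.zero_apply] at h0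
    refine Eq.trans (Finset.sum_congr rfl fun k _ => ?_) h0.symm
    rw [show (0 + k • (1 : ℕ)) = k by simp,
      show ((s.choose k : ℂ) * (-1) ^ (s - k)) = (((-1) ^ (s - k) * (s.choose k) : ℤ) : ℂ) by
        push_cast; ring,
      Int.cast_smul_eq_zsmul]
  rw [hzero]
  simp
end

section
/- Let r ≥ 1, let M be an a_r-module such that T_r : M → M is injective, and let β ∈ ℂ[t,t⁻¹]. Then for all l, m ∈ ℤ, the operator Σ_{i=0}^{2r+2} binom(2r+2,i)·(−1)^{2r+2−i}·D^β_{l−m−i}∘D^β_{m+i} is injective on N(M,β). -/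
open Finsupp

variable {M : Type*} [AddCommGroup M] [Module ℂ M]

/-- The multiplication operator by `β t^n`, where `β = Σ_j b_j t^j` is a Laurent polynomial
(encoded as the finitely supported family `β : ℤ →₀ ℂ` of its coefficients):
`v ⊗ t^k ↦ Σ_j b_j • (v ⊗ t^{k+n+j})`. -/
noncomputable def Bop (β : ℤ →₀ ℂ) (n : ℤ) : (ℤ →₀ M) →ₗ[ℂ] (ℤ →₀ M) :=
  Finsupp.lsum ℂ fun k : ℤ =>
    ∑ j ∈ β.support, β j • (Finsupp.lsingle (k + n + j) : M →ₗ[ℂ] ℤ →₀ M)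

/-- The twisted operator `D^β_n = D_n + β t^n` on `N(M,β) = N(M,0)`:
`D^β_n (v ⊗ t^k) = D_n (v ⊗ t^k) + Σ_j b_j • (v ⊗ t^{k+n+j})`. -/
noncomputable def DBop (r : ℕ) (T : ℕ → Module.End ℂ M) (β : ℤ →₀ ℂ) (n : ℤ) :
    (ℤ →₀ M) →ₗ[ℂ] (ℤ →₀ M) :=
  Dop r T 0 n + Bop β n


open Finset fwdDiff in
private lemma fwdDiff_pow_aux (s : ℕ) : ∀ d ≤ s, ∀ y : ℂ,
    (fwdDiff (1:ℂ))^[s] (fun x : ℂ => x ^ d) y = if d = s then (s.factorial : ℂ) else 0 := by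
  induction s with
  | zero => intro d hd y; interval_cases d; simp
  | succ s ih =>
    intro d hd y
    rw [Function.iterate_succ_apply]
    have hΔ : fwdDiff (1:ℂ) (fun x : ℂ => x ^ d)
        = ∑ j ∈ Finset.range d, (d.choose j : ℂ) • (fun x : ℂ => x ^ j) := by
      funext x
      simp only [fwdDiff, Finset.sum_apply, Pi.smul_apply, smul_eq_mul]
      rw [add_pow]
      rw [Finset.sum_range_succ]
      simp [mul_comm]
    rw [hΔ]
    rw [fwdDiff_iter_finset_sum]
    simp only [fwdDiff_iter_const_smul]
    rw [Finset.sum_apply]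
    simp only [Pi.smul_apply, smul_eq_mul]
    rcases eq_or_ne d (s+1) with rfl | hne
    · rw [Finset.sum_range_succ]
      have h0 : ∀ j ∈ Finset.range s,
          (((s+1).choose j : ℂ)) * (fwdDiff (1:ℂ))^[s] (fun x : ℂ => x ^ j) y = 0 := by
        intro j hj
        simp only [Finset.mem_range] at hj
        rw [ih j (by omega) y, if_neg (by omega), mul_zero]
      rw [Finset.sum_eq_zero h0, zero_add, ih s le_rfl y, if_pos rfl, if_pos rfl]
      rw [Nat.choose_succ_self_right]
      push_cast [Nat.factorial_succ]
      ring
    · rw [if_neg hne]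
      apply Finset.sum_eq_zero
      intro j hj
      simp only [Finset.mem_range] at hj
      rw [ih j (by omega) y, if_neg (by omega), mul_zero]

private lemma sum_c_pow (s d : ℕ) (hd : d ≤ s) (y : ℂ) :
    ∑ i ∈ Finset.range (s+1), ((s.choose i : ℂ) * (-1) ^ (s-i)) * (y + i) ^ d
      = if d = s then (s.factorial : ℂ) else 0 := by
  have h := fwdDiff_iter_eq_sum_shift (1:ℂ) (fun x : ℂ => x ^ d) s y
  rw [fwdDiff_pow_aux s d hd y] at h
  rw [h]
  apply Finset.sum_congr rfl
  intro i _
  simp only [zsmul_eq_mul, nsmul_eq_mul, mul_one]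
  push_cast
  ring

private lemma sum_c_mul_pow (s p q : ℕ) (h : p + q ≤ s) (a b : ℂ) :
    ∑ i ∈ Finset.range (s+1), ((s.choose i : ℂ) * (-1) ^ (s-i)) * ((a+i)^p * (b+i)^q)
      = if p + q = s then (s.factorial : ℂ) else 0 := by
  have expand : ∀ i : ℕ, ((a+(i:ℂ))^p * (b+i)^q)
      = ∑ t ∈ Finset.range (p+1), (a-b)^t * (p.choose t : ℂ) * (b+i)^(p-t+q) := by
    intro i
    have : (a + (i:ℂ))^p = ((a-b) + (b+i))^p := by ring_nf
    rw [this, add_pow, Finset.sum_mul]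
    apply Finset.sum_congr rfl
    intro t ht
    simp only [Finset.mem_range] at ht
    rw [pow_add]
    ring
  calc ∑ i ∈ Finset.range (s+1), ((s.choose i : ℂ) * (-1) ^ (s-i)) * ((a+i)^p * (b+i)^q)
      = ∑ t ∈ Finset.range (p+1), (a-b)^t * (p.choose t : ℂ) *
          (∑ i ∈ Finset.range (s+1), ((s.choose i : ℂ) * (-1) ^ (s-i)) * (b+i)^(p-t+q)) := by
        simp only [expand, Finset.mul_sum]
        rw [Finset.sum_comm]
        rw [Finset.sum_congr rfl (fun t _ => (Finset.mul_sum _ _ _).symm)]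
        apply Finset.sum_congr rfl; intro t _
        rw [Finset.mul_sum]
        apply Finset.sum_congr rfl; intro i _
        ring
    _ = if p + q = s then (s.factorial : ℂ) else 0 := by
        have hle : ∀ t, p - t + q ≤ s := fun t => le_trans (by omega) h
        simp only [fun t => sum_c_pow s (p-t+q) (hle t) b]
        rcases eq_or_ne (p+q) s with hpq | hpq
        · rw [if_pos hpq]
          rw [Finset.sum_eq_single 0]
          · simp [hpq]
          · intro t ht ht0
            simp only [Finset.mem_range] at ht
            rw [if_neg (by omega), mul_zero]
          · simp
        · rw [if_neg hpq]
          apply Finset.sum_eq_zero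
          intro t ht
          simp only [Finset.mem_range] at ht
          rw [if_neg (by omega), mul_zero]

private lemma sum_c_zero (s : ℕ) (hs : 1 ≤ s) :
    ∑ i ∈ Finset.range (s+1), ((s.choose i : ℂ) * (-1) ^ (s-i)) = 0 := by
  have h := sum_c_pow s 0 (by omega) 0
  rw [if_neg (by omega)] at h
  simpa using h

/-- The endomorphism `(k)•id + ∑_p (n^{p+1}/(p+1)!)•T_p` appearing as the coefficient of
`D_n` on `M ⊗ t^k`. -/
noncomputable def gop (r : ℕ) (T : ℕ → Module.End ℂ M) (n k : ℤ) : M →ₗ[ℂ] M :=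
  (k : ℂ) • (LinearMap.id : M →ₗ[ℂ] M) +
    ∑ p ∈ Finset.range (r + 1),
      ((n : ℂ) ^ (p + 1) / (Nat.factorial (p + 1) : ℂ)) • (T p : M →ₗ[ℂ] M)

private lemma Dop_single_s17 (r : ℕ) (T : ℕ → Module.End ℂ M) (n k : ℤ) (v : M) :
    Dop r T 0 n (Finsupp.single k v) = Finsupp.single (k + n) (gop r T n k v) := by
  simp [Dop, gop, Finsupp.lsum_single]

private lemma Bop_single (β : ℤ →₀ ℂ) (n k : ℤ) (v : M) :
    Bop β n (Finsupp.single k v)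
      = ∑ j ∈ β.support, Finsupp.single (k + n + j) (β j • v) := by
  simp [Bop, Finsupp.lsum_single, Finsupp.smul_single]

private lemma DBop_single (r : ℕ) (T : ℕ → Module.End ℂ M) (β : ℤ →₀ ℂ) (n k : ℤ) (v : M) :
    DBop r T β n (Finsupp.single k v)
      = Finsupp.single (k + n) (gop r T n k v)
        + ∑ j ∈ β.support, Finsupp.single (k + n + j) (β j • v) := by
  simp [DBop, Dop_single_s17, Bop_single]

private lemma DBop_comp_single (r : ℕ) (T : ℕ → Module.End ℂ M) (β : ℤ →₀ ℂ) (n n' k : ℤ)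
    (v : M) :
    DBop r T β n' (DBop r T β n (Finsupp.single k v)) =
      Finsupp.single (k+n+n') (gop r T n' (k+n) (gop r T n k v))
      + ∑ j' ∈ β.support, Finsupp.single (k+n+n'+j') (β j' • gop r T n k v)
      + ∑ j ∈ β.support, Finsupp.single (k+n+j+n') (gop r T n' (k+n+j) (β j • v))
      + ∑ j ∈ β.support, ∑ j' ∈ β.support, Finsupp.single (k+n+j+n'+j') (β j' • β j • v) := by
  rw [DBop_single, map_add, map_sum, DBop_single]
  simp only [DBop_single]
  rw [Finset.sum_add_distrib]
  abel

private lemma sum_c_gop_right (r s : ℕ) (hs : r + 2 ≤ s) (T : ℕ → Module.End ℂ M) (b k : ℤ) :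
    ∑ i ∈ Finset.range (s+1), ((s.choose i : ℂ) * (-1) ^ (s-i)) • gop r T (b+(i:ℤ)) k = 0 := by
  simp only [gop, smul_add, Finset.smul_sum]
  rw [Finset.sum_add_distrib]
  have h1 : ∑ i ∈ Finset.range (s+1),
      ((s.choose i : ℂ) * (-1) ^ (s-i)) • ((k:ℂ) • (LinearMap.id : M →ₗ[ℂ] M)) = 0 := by
    rw [← Finset.sum_smul, sum_c_zero s (by omega), zero_smul]
  rw [h1, zero_add, Finset.sum_comm]
  apply Finset.sum_eq_zero
  intro p hp
  simp only [Finset.mem_range] at hp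
  simp only [smul_smul]
  rw [← Finset.sum_smul]
  convert zero_smul ℂ _
  have he : ∀ i ∈ Finset.range (s+1),
      ((s.choose i : ℂ) * (-1) ^ (s-i)) * (((b+(i:ℤ) : ℤ) : ℂ) ^ (p+1) / ((p+1).factorial : ℂ))
      = (((s.choose i : ℂ) * (-1) ^ (s-i)) * ((b:ℂ) + i) ^ (p+1)) * (1 / ((p+1).factorial : ℂ)) := by
    intro i _; push_cast; ring
  rw [Finset.sum_congr rfl he, ← Finset.sum_mul, sum_c_pow s (p+1) (by omega) (b:ℂ),
    if_neg (by omega), zero_mul]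

private lemma sum_c_gop_left (r s : ℕ) (hs : r + 2 ≤ s) (T : ℕ → Module.End ℂ M) (a b : ℤ) :
    ∑ i ∈ Finset.range (s+1),
      ((s.choose i : ℂ) * (-1) ^ (s-i)) • gop r T (a-(i:ℤ)) (b+(i:ℤ)) = 0 := by
  simp only [gop, smul_add, Finset.smul_sum]
  rw [Finset.sum_add_distrib]
  have h1 : ∑ i ∈ Finset.range (s+1),
      ((s.choose i : ℂ) * (-1) ^ (s-i)) • (((b+(i:ℤ):ℤ):ℂ) • (LinearMap.id : M →ₗ[ℂ] M)) = 0 := by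
    simp only [smul_smul]
    rw [← Finset.sum_smul]
    convert zero_smul ℂ _
    have he : ∀ i ∈ Finset.range (s+1),
        ((s.choose i : ℂ) * (-1) ^ (s-i)) * ((b+(i:ℤ):ℤ):ℂ)
        = ((s.choose i : ℂ) * (-1) ^ (s-i)) * ((b:ℂ) + i) ^ 1 := by
      intro i _; push_cast; ring
    rw [Finset.sum_congr rfl he, sum_c_pow s 1 (by omega) (b:ℂ), if_neg (by omega)]
  rw [h1, zero_add, Finset.sum_comm]
  apply Finset.sum_eq_zero
  intro p hp
  simp only [Finset.mem_range] at hp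
  simp only [smul_smul]
  rw [← Finset.sum_smul]
  convert zero_smul ℂ _
  have he : ∀ i ∈ Finset.range (s+1),
      ((s.choose i : ℂ) * (-1) ^ (s-i)) * (((a-(i:ℤ) : ℤ) : ℂ) ^ (p+1) / ((p+1).factorial : ℂ))
      = (((s.choose i : ℂ) * (-1) ^ (s-i)) * ((-(a:ℂ)) + i) ^ (p+1))
          * ((-1)^(p+1) / ((p+1).factorial : ℂ)) := by
    intro i _
    push_cast
    rw [show ((a:ℂ) - (i:ℂ)) ^ (p+1) = (-1)^(p+1) * ((-(a:ℂ)) + i)^(p+1) by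
      rw [show (a:ℂ) - (i:ℂ) = -((-(a:ℂ)) + i) from by ring, neg_pow]]
    ring
  rw [Finset.sum_congr rfl he, ← Finset.sum_mul, sum_c_pow s (p+1) (by omega) (-(a:ℂ)),
    if_neg (by omega), zero_mul]

set_option maxHeartbeats 1000000 in
private lemma gop_comp (r : ℕ) (T : ℕ → Module.End ℂ M) (n' k' n k : ℤ) :
    gop r T n' k' ∘ₗ gop r T n k
      = ((k:ℂ) * (k':ℂ)) • (1 : Module.End ℂ M)
        + ∑ p ∈ Finset.range (r+1),
            ((k:ℂ) * ((n':ℂ)^(p+1) / ((p+1).factorial : ℂ))) • (T p)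
        + (∑ q ∈ Finset.range (r+1),
            (((n:ℂ)^(q+1) / ((q+1).factorial : ℂ)) * (k':ℂ)) • (T q)
        + ∑ q ∈ Finset.range (r+1), ∑ p ∈ Finset.range (r+1),
            (((n:ℂ)^(q+1) / ((q+1).factorial : ℂ)) * ((n':ℂ)^(p+1) / ((p+1).factorial : ℂ))) •
              ((T p) * (T q))) := by
  simp only [gop, ← Module.End.mul_eq_comp, ← Module.End.one_eq_id]
  simp only [add_mul, mul_add, Finset.sum_mul, Finset.mul_sum, smul_mul_assoc, mul_smul_comm,
    smul_smul, mul_one, one_mul, smul_add, Finset.smul_sum, Finset.sum_add_distrib]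

set_option maxHeartbeats 1000000 in
private lemma sum_c_gop_comp (r : ℕ) (hr : 1 ≤ r) (T : ℕ → Module.End ℂ M) (a b m k : ℤ) :
    ∑ i ∈ Finset.range (2*r+2+1), (((2*r+2).choose i : ℂ) * (-1) ^ (2*r+2-i)) •
        (gop r T (a-(i:ℤ)) (b+(i:ℤ)) ∘ₗ gop r T (m+(i:ℤ)) k)
      = (((-1:ℂ))^(r+1) * (((2*r+2).factorial : ℂ) / (((r+1).factorial : ℂ)^2))) •
          ((T r : M →ₗ[ℂ] M) ∘ₗ (T r : M →ₗ[ℂ] M)) := by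
  set s := 2*r+2 with hs
  simp only [gop_comp]
  simp only [smul_add]
  rw [Finset.sum_add_distrib, Finset.sum_add_distrib, Finset.sum_add_distrib]
  have H1 : ∑ i ∈ Finset.range (s+1), ((s.choose i : ℂ) * (-1) ^ (s-i)) •
      (((k:ℂ) * ((b+(i:ℤ):ℤ):ℂ)) • (1 : Module.End ℂ M)) = 0 := by
    simp only [smul_smul]
    rw [← Finset.sum_smul]
    convert zero_smul ℂ _
    have he : ∀ i ∈ Finset.range (s+1),
        ((s.choose i : ℂ) * (-1) ^ (s-i)) * ((k:ℂ) * ((b+(i:ℤ):ℤ):ℂ))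
        = (((s.choose i : ℂ) * (-1) ^ (s-i)) * ((b:ℂ) + i) ^ 1) * (k:ℂ) := by
      intro i _; push_cast; ring
    rw [Finset.sum_congr rfl he, ← Finset.sum_mul, sum_c_pow s 1 (by omega) (b:ℂ),
      if_neg (by omega), zero_mul]
  have H2 : ∑ i ∈ Finset.range (s+1), ((s.choose i : ℂ) * (-1) ^ (s-i)) •
      (∑ p ∈ Finset.range (r+1),
        ((k:ℂ) * (((a-(i:ℤ):ℤ):ℂ)^(p+1) / ((p+1).factorial : ℂ))) • (T p)) = 0 := by
    simp only [Finset.smul_sum]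
    rw [Finset.sum_comm]
    apply Finset.sum_eq_zero
    intro p hp
    simp only [Finset.mem_range] at hp
    simp only [smul_smul]
    rw [← Finset.sum_smul]
    convert zero_smul ℂ _
    have he : ∀ i ∈ Finset.range (s+1),
        ((s.choose i : ℂ) * (-1) ^ (s-i)) * ((k:ℂ) * (((a-(i:ℤ):ℤ):ℂ)^(p+1) / ((p+1).factorial : ℂ)))
        = (((s.choose i : ℂ) * (-1) ^ (s-i)) * ((-(a:ℂ)) + i) ^ (p+1))
            * ((-1)^(p+1) * (k:ℂ) / ((p+1).factorial : ℂ)) := by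
      intro i _
      push_cast
      rw [show ((a:ℂ) - (i:ℂ)) ^ (p+1) = (-1)^(p+1) * ((-(a:ℂ)) + i)^(p+1) by
        rw [show (a:ℂ) - (i:ℂ) = -((-(a:ℂ)) + i) from by ring, neg_pow]]
      ring
    rw [Finset.sum_congr rfl he, ← Finset.sum_mul, sum_c_pow s (p+1) (by omega) (-(a:ℂ)),
      if_neg (by omega), zero_mul]
  have H3 : ∑ i ∈ Finset.range (s+1), ((s.choose i : ℂ) * (-1) ^ (s-i)) •
      (∑ q ∈ Finset.range (r+1),
        ((((m+(i:ℤ):ℤ):ℂ)^(q+1) / ((q+1).factorial : ℂ)) * ((b+(i:ℤ):ℤ):ℂ)) • (T q)) = 0 := by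
    simp only [Finset.smul_sum]
    rw [Finset.sum_comm]
    apply Finset.sum_eq_zero
    intro q hq
    simp only [Finset.mem_range] at hq
    simp only [smul_smul]
    rw [← Finset.sum_smul]
    convert zero_smul ℂ _
    have he : ∀ i ∈ Finset.range (s+1),
        ((s.choose i : ℂ) * (-1) ^ (s-i))
            * ((((m+(i:ℤ):ℤ):ℂ)^(q+1) / ((q+1).factorial : ℂ)) * ((b+(i:ℤ):ℤ):ℂ))
        = (((s.choose i : ℂ) * (-1) ^ (s-i)) * (((b:ℂ) + i) ^ 1 * ((m:ℂ) + i) ^ (q+1)))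
            * (1 / ((q+1).factorial : ℂ)) := by
      intro i _; push_cast; ring
    rw [Finset.sum_congr rfl he, ← Finset.sum_mul,
      sum_c_mul_pow s 1 (q+1) (by omega) (b:ℂ) (m:ℂ), if_neg (by omega), zero_mul]
  rw [H1, H2, H3, zero_add, zero_add, zero_add]
  -- double sum term
  have key : ∀ q ∈ Finset.range (r+1), ∀ p ∈ Finset.range (r+1),
      ∑ i ∈ Finset.range (s+1), ((s.choose i : ℂ) * (-1) ^ (s-i)) *
          ((((m+(i:ℤ):ℤ):ℂ)^(q+1) / ((q+1).factorial : ℂ))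
            * (((a-(i:ℤ):ℤ):ℂ)^(p+1) / ((p+1).factorial : ℂ)))
      = if q = r ∧ p = r then
          ((-1:ℂ))^(r+1) * (((2*r+2).factorial : ℂ) / (((r+1).factorial : ℂ)^2)) else 0 := by
    intro q hq p hp
    simp only [Finset.mem_range] at hq hp
    have he : ∀ i ∈ Finset.range (s+1),
        ((s.choose i : ℂ) * (-1) ^ (s-i)) *
          ((((m+(i:ℤ):ℤ):ℂ)^(q+1) / ((q+1).factorial : ℂ))
            * (((a-(i:ℤ):ℤ):ℂ)^(p+1) / ((p+1).factorial : ℂ)))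
        = (((s.choose i : ℂ) * (-1) ^ (s-i)) * (((-(a:ℂ)) + i) ^ (p+1) * ((m:ℂ) + i) ^ (q+1)))
            * ((-1)^(p+1) / (((q+1).factorial : ℂ) * ((p+1).factorial : ℂ))) := by
      intro i _
      push_cast
      rw [show ((a:ℂ) - (i:ℂ)) ^ (p+1) = (-1)^(p+1) * ((-(a:ℂ)) + i)^(p+1) by
        rw [show (a:ℂ) - (i:ℂ) = -((-(a:ℂ)) + i) from by ring, neg_pow]]
      ring
    rw [Finset.sum_congr rfl he, ← Finset.sum_mul,
      sum_c_mul_pow s (p+1) (q+1) (by omega) (-(a:ℂ)) (m:ℂ)]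
    rcases eq_or_ne (p+1+(q+1)) s with hpq | hpq
    · have hp' : p = r := by omega
      have hq' : q = r := by omega
      subst hp'; subst hq'
      rw [if_pos hpq, if_pos ⟨rfl, rfl⟩]
      field_simp
      ring
    · rw [if_neg hpq, if_neg (by omega), zero_mul]
  have step : ∀ q ∈ Finset.range (r+1), ∀ p ∈ Finset.range (r+1),
      ∑ i ∈ Finset.range (s+1), ((s.choose i : ℂ) * (-1) ^ (s-i)) •
          (((((m+(i:ℤ):ℤ):ℂ)^(q+1) / ((q+1).factorial : ℂ))
            * (((a-(i:ℤ):ℤ):ℂ)^(p+1) / ((p+1).factorial : ℂ))) • ((T p) * (T q)))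
      = (if q = r ∧ p = r then
          ((-1:ℂ))^(r+1) * (((2*r+2).factorial : ℂ) / (((r+1).factorial : ℂ)^2)) else 0) •
          ((T p) * (T q)) := by
    intro q hq p hp
    simp only [smul_smul]
    rw [← Finset.sum_smul, key q hq p hp]
  calc ∑ i ∈ Finset.range (s+1), ((s.choose i : ℂ) * (-1) ^ (s-i)) •
        ∑ q ∈ Finset.range (r+1), ∑ p ∈ Finset.range (r+1),
          ((((m+(i:ℤ):ℤ):ℂ)^(q+1) / ((q+1).factorial : ℂ))
            * (((a-(i:ℤ):ℤ):ℂ)^(p+1) / ((p+1).factorial : ℂ))) • ((T p) * (T q))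
      = ∑ q ∈ Finset.range (r+1), ∑ p ∈ Finset.range (r+1),
          ∑ i ∈ Finset.range (s+1), ((s.choose i : ℂ) * (-1) ^ (s-i)) •
            (((((m+(i:ℤ):ℤ):ℂ)^(q+1) / ((q+1).factorial : ℂ))
              * (((a-(i:ℤ):ℤ):ℂ)^(p+1) / ((p+1).factorial : ℂ))) • ((T p) * (T q))) := by
        simp only [Finset.smul_sum]
        rw [Finset.sum_comm]
        apply Finset.sum_congr rfl
        intro q _
        rw [Finset.sum_comm]
    _ = (((-1:ℂ))^(r+1) * (((2*r+2).factorial : ℂ) / (((r+1).factorial : ℂ)^2))) •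
          ((T r : M →ₗ[ℂ] M) ∘ₗ (T r : M →ₗ[ℂ] M)) := by
        rw [Finset.sum_congr rfl (fun q hq => Finset.sum_congr rfl (fun p hp => step q hq p hp))]
        rw [Finset.sum_eq_single r]
        · rw [Finset.sum_eq_single r]
          · rw [if_pos ⟨rfl, rfl⟩, Module.End.mul_eq_comp]
          · intro p _ hpr
            rw [if_neg (by tauto), zero_smul]
          · intro h; exact absurd (Finset.self_mem_range_succ r) h
        · intro q _ hqr
          apply Finset.sum_eq_zero
          intro p _
          rw [if_neg (by tauto), zero_smul]
        · intro h; exact absurd (Finset.self_mem_range_succ r) h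

/-- for `r ≥ 1`, an `a_r`-module `M` with `T_r` injective, and a Laurent
polynomial `β`, the operator `Σ_{i=0}^{2r+2} binom(2r+2,i)·(−1)^{2r+2−i}·D^β_{l−m−i}∘D^β_{m+i}`
is injective on `N(M,β)` for all `l, m ∈ ℤ`. -/
theorem twisted_omega_injective (r : ℕ) (hr : 1 ≤ r) (T : ℕ → Module.End ℂ M)
    (hT : IsArModule r T) (hinj : Function.Injective (T r))
    (β : ℤ →₀ ℂ) (l m : ℤ) :
    Function.Injective
      (∑ i ∈ Finset.range (2 * r + 3),
        (((2 * r + 2).choose i : ℂ) * (-1) ^ (2 * r + 2 - i)) •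
          (DBop r T β (l - m - (i : ℤ)) ∘ₗ DBop r T β (m + (i : ℤ)))) := by
  rw [show 2*r+3 = 2*r+2+1 by omega]
  set Cc : ℂ := ((-1:ℂ))^(r+1) * (((2*r+2).factorial : ℂ) / (((r+1).factorial : ℂ)^2)) with hCcdef
  have hCc : Cc ≠ 0 := by
    apply mul_ne_zero (pow_ne_zero _ (by norm_num))
    exact div_ne_zero (Nat.cast_ne_zero.2 (Nat.factorial_ne_zero _))
      (pow_ne_zero _ (Nat.cast_ne_zero.2 (Nat.factorial_ne_zero _)))
  have key : (∑ i ∈ Finset.range (2*r+2+1),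
        (((2 * r + 2).choose i : ℂ) * (-1) ^ (2 * r + 2 - i)) •
          (DBop r T β (l - m - (i : ℤ)) ∘ₗ DBop r T β (m + (i : ℤ))))
      = Finsupp.lmapDomain M ℂ (fun x => x + l) ∘ₗ
          Finsupp.mapRange.linearMap (Cc • ((T r : M →ₗ[ℂ] M) ∘ₗ (T r : M →ₗ[ℂ] M))) := by
    apply Finsupp.lhom_ext
    intro k v
    rw [LinearMap.sum_apply]
    simp only [LinearMap.smul_apply, LinearMap.comp_apply]
    simp only [DBop_comp_single]
    simp only [show ∀ i : ℕ, k + (m + (i:ℤ)) + (l - m - (i:ℤ)) = k + l from fun i => by ring]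
    simp only [show ∀ (i : ℕ) (j : ℤ), k + (m + (i:ℤ)) + j + (l - m - (i:ℤ)) = k + l + j
      from fun i j => by ring]
    simp only [show ∀ i : ℕ, k + (m + (i:ℤ)) = k + m + (i:ℤ) from fun i => by ring]
    simp only [show ∀ (i : ℕ) (j : ℤ), k + m + (i:ℤ) + j = k + m + j + (i:ℤ)
      from fun i j => by ring]
    simp only [smul_add]
    rw [Finset.sum_add_distrib, Finset.sum_add_distrib, Finset.sum_add_distrib]
    have hcomp := congrArg (fun F : M →ₗ[ℂ] M => F v) (sum_c_gop_comp r hr T (l-m) (k+m) m k)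
    simp only [LinearMap.sum_apply, LinearMap.smul_apply, LinearMap.comp_apply] at hcomp
    have S1 : ∑ i ∈ Finset.range (2*r+2+1),
        (((2*r+2).choose i : ℂ) * (-1) ^ (2*r+2-i)) •
          Finsupp.single (k+l) (gop r T (l-m-(i:ℤ)) (k+m+(i:ℤ)) (gop r T (m+(i:ℤ)) k v))
        = Finsupp.single (k+l) ((Cc • ((T r : M →ₗ[ℂ] M) ∘ₗ (T r : M →ₗ[ℂ] M))) v) := by
      simp only [Finsupp.smul_single]
      rw [← Finsupp.single_finset_sum, hcomp]
      simp only [LinearMap.smul_apply, LinearMap.comp_apply, hCcdef]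
    have S2 : ∑ i ∈ Finset.range (2*r+2+1),
        (((2*r+2).choose i : ℂ) * (-1) ^ (2*r+2-i)) •
          ∑ j' ∈ β.support, Finsupp.single (k+l+j') (β j' • gop r T (m+(i:ℤ)) k v) = 0 := by
      simp only [Finset.smul_sum]
      rw [Finset.sum_comm]
      apply Finset.sum_eq_zero
      intro j' _
      have h0 := congrArg (fun F : M →ₗ[ℂ] M => F (β j' • v))
        (sum_c_gop_right r (2*r+2) (by omega) T m k)
      simp only [LinearMap.sum_apply, LinearMap.smul_apply, LinearMap.zero_apply] at h0
      simp only [Finsupp.smul_single]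
      rw [← Finsupp.single_finset_sum]
      have he : ∀ i ∈ Finset.range (2*r+2+1),
          (((2*r+2).choose i : ℂ) * (-1) ^ (2*r+2-i)) • (β j' • gop r T (m+(i:ℤ)) k v)
          = (((2*r+2).choose i : ℂ) * (-1) ^ (2*r+2-i)) • gop r T (m+(i:ℤ)) k (β j' • v) := by
        intro i _
        rw [map_smul]
      rw [Finset.sum_congr rfl he, h0, Finsupp.single_zero]
    have S3 : ∑ i ∈ Finset.range (2*r+2+1),
        (((2*r+2).choose i : ℂ) * (-1) ^ (2*r+2-i)) •
          ∑ j ∈ β.support,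
            Finsupp.single (k+l+j) (gop r T (l-m-(i:ℤ)) (k+m+j+(i:ℤ)) (β j • v)) = 0 := by
      simp only [Finset.smul_sum]
      rw [Finset.sum_comm]
      apply Finset.sum_eq_zero
      intro j _
      have h0 := congrArg (fun F : M →ₗ[ℂ] M => F (β j • v))
        (sum_c_gop_left r (2*r+2) (by omega) T (l-m) (k+m+j))
      simp only [LinearMap.sum_apply, LinearMap.smul_apply, LinearMap.zero_apply] at h0
      simp only [Finsupp.smul_single]
      rw [← Finsupp.single_finset_sum, h0, Finsupp.single_zero]
    have S4 : ∑ i ∈ Finset.range (2*r+2+1),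
        (((2*r+2).choose i : ℂ) * (-1) ^ (2*r+2-i)) •
          ∑ j ∈ β.support, ∑ j' ∈ β.support,
            Finsupp.single (k+l+j+j') (β j' • β j • v) = 0 := by
      rw [← Finset.sum_smul, sum_c_zero (2*r+2) (by omega), zero_smul]
    rw [S1, S2, S3, S4, add_zero, add_zero, add_zero]
    simp [Finsupp.mapRange_single, Finsupp.lmapDomain_apply, Finsupp.mapDomain_single]
  rw [← LinearMap.coe_sum, key, LinearMap.coe_comp]
  apply Function.Injective.comp
  · exact Finsupp.mapDomain_injective (fun x y h => by omega)
  · have hg : Function.Injective ⇑(Cc • ((T r : M →ₗ[ℂ] M) ∘ₗ (T r : M →ₗ[ℂ] M))) := by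
      have : ⇑(Cc • ((T r : M →ₗ[ℂ] M) ∘ₗ (T r : M →ₗ[ℂ] M)))
          = (fun w : M => Cc • w) ∘ (⇑(T r) ∘ ⇑(T r)) := by
        funext w; simp
      rw [this]
      exact (smul_right_injective M hCc).comp (hinj.comp hinj)
    intro x y hxy
    apply Finsupp.ext
    intro n
    have := congrArg (fun z : ℤ →₀ M => z n) hxy
    simp only [Finsupp.mapRange.linearMap_apply, Finsupp.mapRange_apply] at this
    exact hg this
end
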